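/- Let 1 ≤ p < ∞, 0 < q < p, r = pq/(p−q), let v, w be weights on (a,b), and let ε > 0. Then there is a constant c, depending only on q, r and ε, such that for every t ∈ (a,b): V(t)^{−ε} (∫_a^t V^{q(ε+1)} w)^{1/q} ≤ c · B₁,ε. In particular, B₁,ε < ∞ implies A_ε < ∞, and moreover lim_{s→a⁺} V(s)^{−ε} (∫_a^s V^{q(ε+1)} w)^{1/q} = 0 whenever B₁,ε < ∞. -/

import Mathlib

open MeasureTheory Set Filter
open scoped ENNReal Topology

/-- The open subinterval of `ℝ` with extended-real endpoints `a` and `b`. -/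
def EIoo (a b : EReal) : Set ℝ := {x : ℝ | a < (x : EReal) ∧ (x : EReal) < b}

/-- A weight on `(a,b)`: a measurable function which is positive and finite a.e. on `(a,b)`. -/
def IsWeight (a b : EReal) (v : ℝ → ℝ≥0∞) : Prop :=
  Measurable v ∧ ∀ᵐ x ∂(volume.restrict (EIoo a b)), v x ≠ 0 ∧ v x ≠ ∞

/-- The function `V` in the case `1 < p`:  `V(t) = (∫_a^t v^{1-p'})^{1/p'}`, `p' = p/(p-1)`. -/
noncomputable def Vp (a : EReal) (p : ℝ) (v : ℝ → ℝ≥0∞) (t : ℝ) : ℝ≥0∞ :=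
  (∫⁻ s in EIoo a (t : EReal), v s ^ (1 - p / (p - 1))) ^ ((p - 1) / p)

/-- The function `V` in the case `p = 1`:  `V(t) = ess sup_{s ∈ (a,t)} 1/v(s)`. -/
noncomputable def V1 (a : EReal) (v : ℝ → ℝ≥0∞) (t : ℝ) : ℝ≥0∞ :=
  essSup (fun s => (v s)⁻¹) (volume.restrict (EIoo a (t : EReal)))

/-- `A_ε = sup_{t ∈ (a,b)} V(t)^{-ε} (∫_a^t V^{q(ε+1)} w)^{1/q}`. -/
noncomputable def Aeps (a b : EReal) (q ε : ℝ) (V w : ℝ → ℝ≥0∞) : ℝ≥0∞ :=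
  ⨆ t ∈ EIoo a b,
    V t ^ (-ε) * (∫⁻ s in EIoo a (t : EReal), V s ^ (q * (ε + 1)) * w s) ^ (1 / q)

/-- `B_{1,ε} = (∫_a^b (∫_a^t V^{q(ε+1)} w)^{r/p} V(t)^{q(ε+1)-εr} w(t) dt)^{1/r}`. -/
noncomputable def B1 (a b : EReal) (p q r ε : ℝ) (V w : ℝ → ℝ≥0∞) : ℝ≥0∞ :=
  (∫⁻ t in EIoo a b,
      (∫⁻ s in EIoo a (t : EReal), V s ^ (q * (ε + 1)) * w s) ^ (r / p) *
        (V t ^ (q * (ε + 1) - ε * r) * w t)) ^ (1 / r)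

/-- The weighted Hardy inequality with constant `C`, case `p > 1`
(`RHS = C (∫_a^b f^p v)^{1/p}`). -/
def HardyP (a b : EReal) (p q : ℝ) (v w : ℝ → ℝ≥0∞) (C : ℝ≥0∞) : Prop :=
  ∀ f : ℝ → ℝ≥0∞, Measurable f →
    (∫⁻ t in EIoo a b, (∫⁻ s in EIoo a (t : EReal), f s) ^ q * w t) ^ (1 / q)
      ≤ C * (∫⁻ x in EIoo a b, f x ^ p * v x) ^ (1 / p)

/-- The weighted Hardy inequality with constant `C`, case `p = 1`
(`RHS = C ∫_a^b f v`). -/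
def Hardy1 (a b : EReal) (q : ℝ) (v w : ℝ → ℝ≥0∞) (C : ℝ≥0∞) : Prop :=
  ∀ f : ℝ → ℝ≥0∞, Measurable f →
    (∫⁻ t in EIoo a b, (∫⁻ s in EIoo a (t : EReal), f s) ^ q * w t) ^ (1 / q)
      ≤ C * ∫⁻ x in EIoo a b, f x * v x

/-- `A_ε < ∞`, including the requirement that every subexpression (in particular
`V(t)` and the inner integral) is finite for every `t ∈ (a,b)`. -/
def AFin (a b : EReal) (q ε : ℝ) (V w : ℝ → ℝ≥0∞) : Prop :=
  (∀ t ∈ EIoo a b,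
      V t ≠ ∞ ∧ (∫⁻ s in EIoo a (t : EReal), V s ^ (q * (ε + 1)) * w s) ≠ ∞) ∧
    Aeps a b q ε V w ≠ ∞

/-- `B_{1,ε} < ∞`, including the requirement that every subexpression (in particular
`V(t)` and the inner integral) is finite for every `t ∈ (a,b)`. -/
def B1Fin (a b : EReal) (p q r ε : ℝ) (V w : ℝ → ℝ≥0∞) : Prop :=
  (∀ t ∈ EIoo a b,
      V t ≠ ∞ ∧ (∫⁻ s in EIoo a (t : EReal), V s ^ (q * (ε + 1)) * w s) ≠ ∞) ∧
    B1 a b p q r ε V w ≠ ∞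

lemma measurableSet_EIoo (a b : EReal) : MeasurableSet (EIoo a b) :=
  continuous_coe_real_ereal.measurable measurableSet_Ioo

lemma EIoo_mono {a c d : EReal} (h : c ≤ d) : EIoo a c ⊆ EIoo a d :=
  fun _ hx => ⟨hx.1, lt_of_lt_of_le hx.2 h⟩

lemma key_lower (a : EReal) (t : ℝ) (G : ℝ → ℝ≥0∞) (hG : Measurable G) (α : ℝ) (hα : 0 < α) :
    (∫⁻ s in EIoo a (t : EReal), G s) ^ (α + 1) ≤
      2 ^ (α + 1) * ∫⁻ s in EIoo a (t : EReal), (∫⁻ y in EIoo a (s : EReal), G y) ^ α * G s := by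
  set ν : Measure ℝ := volume.withDensity G with hν
  have hFdef : ∀ s : ℝ, ν (EIoo a (s : EReal)) = ∫⁻ y in EIoo a (s : EReal), G y :=
    fun s => withDensity_apply G (measurableSet_EIoo a s)
  set F : ℝ → ℝ≥0∞ := fun s => ν (EIoo a (s : EReal)) with hF
  have hFmono : Monotone F := fun s s' h =>
    measure_mono (EIoo_mono (EReal.coe_le_coe_iff.mpr h))
  have hFmeas : Measurable F := hFmono.measurable
  have hrw : (∫⁻ s in EIoo a (t : EReal), (∫⁻ y in EIoo a (s : EReal), G y) ^ α * G s)
      = ∫⁻ s in EIoo a (t : EReal), F s ^ α * G s :=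
    lintegral_congr fun s => by rw [← hFdef]
  rw [hrw, show (∫⁻ s in EIoo a (t : EReal), G s) = ν (EIoo a (t : EReal)) from (hFdef t).symm]
  set M := ν (EIoo a (t : EReal)) with hM
  have sub : ∀ β : ℝ≥0∞, β ^ α * (M - β) ≤ ∫⁻ s in EIoo a (t : EReal), F s ^ α * G s := by
    intro β
    set S := EIoo a (t : EReal) ∩ {s | β ≤ F s} with hS
    have hBmeas : MeasurableSet {s : ℝ | β ≤ F s} := hFmeas measurableSet_Ici
    have hSmeas : MeasurableSet S := (measurableSet_EIoo a t).inter hBmeas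
    have hC : ν (EIoo a (t : EReal) \ {s | β ≤ F s}) ≤ β := by
      set C := EIoo a (t : EReal) \ {s | β ≤ F s} with hCdef
      rcases eq_empty_or_nonempty C with h | hne
      · simp [h]
      · have hbdd : BddAbove C :=
          ⟨t, fun x hx => le_of_lt (EReal.coe_lt_coe_iff.mp hx.1.2)⟩
        set u := sSup C with hu
        have hCsub : C ⊆ EIoo a (u : EReal) ∪ {u} := by
          intro x hx
          rcases lt_or_eq_of_le (le_csSup hbdd hx) with h' | h'
          · exact Or.inl ⟨hx.1.1, EReal.coe_lt_coe_iff.mpr h'⟩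
          · exact Or.inr (by simp [h', hu])
        have hxe : ∀ n : ℕ, ∃ x ∈ C, u - 1 / (n + 1) < x := by
          intro n
          refine exists_lt_of_lt_csSup hne ?_
          have : (0 : ℝ) < 1 / (n + 1) := by positivity
          linarith
        choose x hxC hxlt using hxe
        have hcover : EIoo a (u : EReal) ⊆ ⋃ n, EIoo a ((x n : ℝ) : EReal) := by
          intro y hy
          have hyu : y < u := EReal.coe_lt_coe_iff.mp hy.2
          obtain ⟨n, hn⟩ := exists_nat_one_div_lt (show (0 : ℝ) < u - y by linarith)
          refine mem_iUnion.mpr ⟨n, hy.1, EReal.coe_lt_coe_iff.mpr ?_⟩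
          have := hxlt n
          linarith
        have hdir : Directed (· ⊆ ·) (fun n => EIoo a ((x n : ℝ) : EReal)) := by
          intro m n
          rcases le_total (x m) (x n) with h' | h'
          · exact ⟨n, EIoo_mono (EReal.coe_le_coe_iff.mpr h'), subset_rfl⟩
          · exact ⟨m, subset_rfl, EIoo_mono (EReal.coe_le_coe_iff.mpr h')⟩
        have hFu : ν (EIoo a (u : EReal)) ≤ β := by
          calc ν (EIoo a (u : EReal)) ≤ ν (⋃ n, EIoo a ((x n : ℝ) : EReal)) :=
                measure_mono hcover
            _ = ⨆ n, ν (EIoo a ((x n : ℝ) : EReal)) := hdir.measure_iUnion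
            _ ≤ β := iSup_le fun n => le_of_lt (lt_of_not_ge (hxC n).2)
        calc ν C ≤ ν (EIoo a (u : EReal) ∪ {u}) := measure_mono hCsub
          _ ≤ ν (EIoo a (u : EReal)) + ν {u} := measure_union_le _ _
          _ ≤ β + 0 := add_le_add hFu (le_of_eq
              ((withDensity_absolutelyContinuous volume G) (measure_singleton u)))
          _ = β := add_zero β
    have hsplit : M ≤ ν S + β := by
      have h := measure_inter_add_diff (μ := ν) (EIoo a (t : EReal)) hBmeas
      calc M = ν S + ν (EIoo a (t : EReal) \ {s | β ≤ F s}) := h.symm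
        _ ≤ ν S + β := add_le_add_right hC _
    calc β ^ α * (M - β) ≤ β ^ α * ν S :=
          mul_le_mul_right (tsub_le_iff_right.mpr hsplit) _
      _ = ∫⁻ s in S, β ^ α * G s := by
          rw [lintegral_const_mul _ hG, ← withDensity_apply G hSmeas]
      _ ≤ ∫⁻ s in S, F s ^ α * G s := by
          refine setLIntegral_mono ((hFmeas.pow_const α).mul hG) fun z hz => ?_
          exact mul_le_mul_left (ENNReal.rpow_le_rpow hz.2 hα.le) _
      _ ≤ ∫⁻ s in EIoo a (t : EReal), F s ^ α * G s := lintegral_mono_set inter_subset_left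
  rcases eq_or_ne M 0 with hM0 | hM0
  · rw [hM0, ENNReal.zero_rpow_of_pos (by linarith)]
    exact bot_le
  rcases eq_or_ne M ⊤ with hMtop | hMtop
  · have h1 := sub 1
    rw [hMtop, ENNReal.top_sub ENNReal.one_ne_top, ENNReal.one_rpow, one_mul] at h1
    rw [top_le_iff.mp h1, hMtop, ENNReal.mul_top
      (ENNReal.rpow_pos (by norm_num) ENNReal.ofNat_ne_top).ne',
      ENNReal.top_rpow_of_pos (by linarith)]
  · have h2 := sub (M / 2)
    rw [ENNReal.sub_half hMtop] at h2
    have e1 : (2 : ℝ≥0∞) ^ (α + 1) = 2 ^ α * 2 := by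
      rw [ENNReal.rpow_add α 1 two_ne_zero ENNReal.ofNat_ne_top, ENNReal.rpow_one]
    have e2 : (2 : ℝ≥0∞) ^ α * (M / 2) ^ α = M ^ α := by
      rw [← ENNReal.mul_rpow_of_nonneg _ _ hα.le,
        ENNReal.mul_div_cancel two_ne_zero ENNReal.ofNat_ne_top]
    have e3 : (2 : ℝ≥0∞) * (M / 2) = M :=
      ENNReal.mul_div_cancel two_ne_zero ENNReal.ofNat_ne_top
    have ekey : M ^ (α + 1) = 2 ^ (α + 1) * ((M / 2) ^ α * (M / 2)) := by
      rw [ENNReal.rpow_add α 1 hM0 hMtop, ENNReal.rpow_one, e1]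
      calc M ^ α * M = (2 ^ α * (M / 2) ^ α) * (2 * (M / 2)) := by rw [e2, e3]
        _ = 2 ^ α * 2 * ((M / 2) ^ α * (M / 2)) := by ring
    rw [ekey]
    exact mul_le_mul_right h2 _

lemma ptw (a : EReal) (p q r ε : ℝ) (hq : 0 < q) (hr0 : 0 < r) (hε : 0 < ε)
    (hα : 0 < r / p) (hrq : r / q = r / p + 1)
    (V w : ℝ → ℝ≥0∞) (hV : Monotone V) (hw : Measurable w) (t : ℝ) :
    V t ^ (-ε) * (∫⁻ s in EIoo a (t : EReal), V s ^ (q * (ε + 1)) * w s) ^ (1 / q) ≤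
      (2 : ℝ≥0∞) ^ (1 / q) *
        (∫⁻ s in EIoo a (t : EReal),
            (∫⁻ y in EIoo a (s : EReal), V y ^ (q * (ε + 1)) * w y) ^ (r / p) *
              (V s ^ (q * (ε + 1) - ε * r) * w s)) ^ (1 / r) := by
  have hVmeas : Measurable V := hV.measurable
  set G : ℝ → ℝ≥0∞ := fun s => V s ^ (q * (ε + 1)) * w s with hG
  have hGmeas : Measurable G := (hVmeas.pow_const _).mul hw
  rcases eq_or_ne (V t) 0 with h0 | h0
  · have hM : (∫⁻ s in EIoo a (t : EReal), G s) = 0 := by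
      rw [setLIntegral_congr_fun (measurableSet_EIoo a t)
        (fun s hs => ?_), lintegral_zero]
      have hVs : V s = 0 := le_antisymm
        (h0 ▸ hV (le_of_lt (EReal.coe_lt_coe_iff.mp hs.2))) bot_le
      rw [hG]
      simp only
      rw [hVs, ENNReal.zero_rpow_of_pos (by positivity), zero_mul]
    rw [hM, ENNReal.zero_rpow_of_pos (by positivity), mul_zero]
    exact bot_le
  rcases eq_or_ne (V t) ⊤ with htop | htop
  · rw [htop, ENNReal.top_rpow_of_neg (by linarith), zero_mul]
    exact bot_le
  · have hVne : V t ^ (-(ε * r)) ≠ ⊤ := by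
      rw [ENNReal.rpow_neg]
      exact ENNReal.inv_ne_top.mpr (ENNReal.rpow_pos (zero_lt_iff.mpr h0) htop).ne'
    set Ffun : ℝ → ℝ≥0∞ := fun s => ∫⁻ y in EIoo a (s : EReal), G y with hFfun
    have hFmono : Monotone Ffun := fun s s' h =>
      lintegral_mono_set (EIoo_mono (EReal.coe_le_coe_iff.mpr h))
    have hFmeas : Measurable Ffun := hFmono.measurable
    set I := ∫⁻ s in EIoo a (t : EReal),
        Ffun s ^ (r / p) * (V s ^ (q * (ε + 1) - ε * r) * w s) with hI
    have step1 : ∀ s ∈ EIoo a (t : EReal),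
        V t ^ (-(ε * r)) * (Ffun s ^ (r / p) * G s)
          ≤ Ffun s ^ (r / p) * (V s ^ (q * (ε + 1) - ε * r) * w s) := by
      intro s hs
      have hcomm : V t ^ (-(ε * r)) * (Ffun s ^ (r / p) * G s)
          = Ffun s ^ (r / p) * (V t ^ (-(ε * r)) * G s) := by ring
      rw [hcomm]
      refine mul_le_mul_right ?_ _
      show V t ^ (-(ε * r)) * (V s ^ (q * (ε + 1)) * w s)
          ≤ V s ^ (q * (ε + 1) - ε * r) * w s
      rcases eq_or_ne (V s) 0 with hVs0 | hVs0
      · rw [hVs0, ENNReal.zero_rpow_of_pos (by positivity), zero_mul, mul_zero]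
        exact bot_le
      · have hVs_le : V s ≤ V t := hV (le_of_lt (EReal.coe_lt_coe_iff.mp hs.2))
        have hVs_top : V s ≠ ⊤ := fun h => htop (top_le_iff.mp (h ▸ hVs_le))
        have hinv : V t ^ (-(ε * r)) ≤ V s ^ (-(ε * r)) := by
          rw [ENNReal.rpow_neg, ENNReal.rpow_neg]
          exact ENNReal.inv_le_inv.mpr (ENNReal.rpow_le_rpow hVs_le (by positivity))
        calc V t ^ (-(ε * r)) * (V s ^ (q * (ε + 1)) * w s)
            = V s ^ (q * (ε + 1)) * V t ^ (-(ε * r)) * w s := by ring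
          _ ≤ V s ^ (q * (ε + 1)) * V s ^ (-(ε * r)) * w s :=
              mul_le_mul_left (mul_le_mul_right hinv _) _
          _ = V s ^ (q * (ε + 1) - ε * r) * w s := by
              rw [← ENNReal.rpow_add _ _ hVs0 hVs_top]
              ring_nf
    have step2 : V t ^ (-(ε * r)) *
        (∫⁻ s in EIoo a (t : EReal), Ffun s ^ (r / p) * G s) ≤ I := by
      rw [← lintegral_const_mul' _ _ hVne]
      exact setLIntegral_mono
        ((hFmeas.pow_const _).mul ((hVmeas.pow_const _).mul hw)) step1
    have step3 : (∫⁻ s in EIoo a (t : EReal), G s) ^ (r / q) ≤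
        2 ^ (r / q) * ∫⁻ s in EIoo a (t : EReal), Ffun s ^ (r / p) * G s := by
      rw [hrq]
      exact key_lower a t G hGmeas (r / p) hα
    have hcomb : V t ^ (-(ε * r)) * (∫⁻ s in EIoo a (t : EReal), G s) ^ (r / q)
        ≤ 2 ^ (r / q) * I := by
      calc V t ^ (-(ε * r)) * (∫⁻ s in EIoo a (t : EReal), G s) ^ (r / q)
          ≤ V t ^ (-(ε * r)) *
            (2 ^ (r / q) * ∫⁻ s in EIoo a (t : EReal), Ffun s ^ (r / p) * G s) :=
            mul_le_mul_right step3 _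
        _ = 2 ^ (r / q) * (V t ^ (-(ε * r)) *
            ∫⁻ s in EIoo a (t : EReal), Ffun s ^ (r / p) * G s) := by ring
        _ ≤ 2 ^ (r / q) * I := mul_le_mul_right step2 _
    have eL : V t ^ (-ε) * (∫⁻ s in EIoo a (t : EReal), G s) ^ (1 / q)
        = (V t ^ (-(ε * r)) * (∫⁻ s in EIoo a (t : EReal), G s) ^ (r / q)) ^ (1 / r) := by
      rw [ENNReal.mul_rpow_of_nonneg _ _ (by positivity : (0:ℝ) ≤ 1 / r),
        ← ENNReal.rpow_mul, ← ENNReal.rpow_mul]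
      congr 2 <;> field_simp <;> ring
    have eR : (2 : ℝ≥0∞) ^ (1 / q) * I ^ (1 / r)
        = ((2 : ℝ≥0∞) ^ (r / q) * I) ^ (1 / r) := by
      rw [ENNReal.mul_rpow_of_nonneg _ _ (by positivity : (0:ℝ) ≤ 1 / r),
        ← ENNReal.rpow_mul]
      congr 2
      field_simp
    rw [eL, eR]
    exact ENNReal.rpow_le_rpow hcomb (by positivity)

/-- for `1 ≤ p < ∞`, `0 < q < p`, `r = pq/(p-q)` there is a constant `c`
depending only on `q, r, ε` with `V(t)^{-ε} (∫_a^t V^{q(ε+1)} w)^{1/q} ≤ c·B_{1,ε}` for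
all `t ∈ (a,b)`; in particular `B_{1,ε} < ∞` implies `A_ε < ∞`, and moreover the
expression tends to `0` as `s → a⁺` whenever `B_{1,ε} < ∞`. -/
theorem stmt15 (p q r ε : ℝ) (hp : 1 ≤ p) (hq : 0 < q) (hqp : q < p)
    (hr : r = p * q / (p - q)) (hε : 0 < ε) :
    ∃ c : ℝ≥0∞, 0 < c ∧ c ≠ ∞ ∧
      ∀ (a b : EReal), a < b →
        ∀ v w : ℝ → ℝ≥0∞, IsWeight a b v → IsWeight a b w →
          ∀ V : ℝ → ℝ≥0∞, ((1 < p ∧ V = Vp a p v) ∨ (p = 1 ∧ V = V1 a v)) →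
            (∀ t ∈ EIoo a b,
                V t ^ (-ε) *
                    (∫⁻ s in EIoo a (t : EReal), V s ^ (q * (ε + 1)) * w s) ^ (1 / q)
                  ≤ c * B1 a b p q r ε V w) ∧
              (B1 a b p q r ε V w ≠ ∞ → Aeps a b q ε V w ≠ ∞) ∧
              (B1 a b p q r ε V w ≠ ∞ →
                Tendsto
                  (fun s : ℝ =>
                    V s ^ (-ε) *
                      (∫⁻ y in EIoo a (s : EReal), V y ^ (q * (ε + 1)) * w y) ^ (1 / q))
                  (comap (fun x : ℝ => (x : EReal)) (𝓝[Set.Ioi a] a)) (𝓝 0)) := by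
  have hp0 : 0 < p := lt_of_lt_of_le one_pos hp
  have hpq : 0 < p - q := by linarith
  have hr0 : 0 < r := by rw [hr]; positivity
  have hα : 0 < r / p := by positivity
  have hrq : r / q = r / p + 1 := by
    rw [hr]; field_simp; ring
  have hcpos : (0 : ℝ≥0∞) < 2 ^ (1 / q) :=
    ENNReal.rpow_pos (by norm_num) ENNReal.ofNat_ne_top
  have hcne : (2 : ℝ≥0∞) ^ (1 / q) ≠ ⊤ :=
    ENNReal.rpow_ne_top_of_nonneg (by positivity) ENNReal.ofNat_ne_top
  refine ⟨(2 : ℝ≥0∞) ^ (1 / q), hcpos, hcne, ?_⟩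
  intro a b hab v w hv hw V hVdef
  have hVmono : Monotone V := by
    rcases hVdef with ⟨hp1, rfl⟩ | ⟨hp1, rfl⟩
    · intro s s' hss'
      exact ENNReal.rpow_le_rpow
        (lintegral_mono_set (EIoo_mono (EReal.coe_le_coe_iff.mpr hss')))
        (div_nonneg (by linarith) hp0.le)
    · intro s s' hss'
      exact essSup_mono_measure (Measure.absolutelyContinuous_of_le
        (Measure.restrict_mono (EIoo_mono (EReal.coe_le_coe_iff.mpr hss')) le_rfl))
  have hw' : Measurable w := hw.1
  set Hfun : ℝ → ℝ≥0∞ := fun s =>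
    (∫⁻ y in EIoo a (s : EReal), V y ^ (q * (ε + 1)) * w y) ^ (r / p) *
      (V s ^ (q * (ε + 1) - ε * r) * w s) with hHfun
  have hB1eq : B1 a b p q r ε V w = (∫⁻ s in EIoo a b, Hfun s) ^ (1 / r) := rfl
  have hptw := ptw a p q r ε hq hr0 hε hα hrq V w hVmono hw'
  have part1 : ∀ t ∈ EIoo a b,
      V t ^ (-ε) * (∫⁻ s in EIoo a (t : EReal), V s ^ (q * (ε + 1)) * w s) ^ (1 / q)
        ≤ (2 : ℝ≥0∞) ^ (1 / q) * B1 a b p q r ε V w := by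
    intro t ht
    refine (hptw t).trans ?_
    rw [hB1eq]
    refine mul_le_mul_right (ENNReal.rpow_le_rpow (lintegral_mono_set ?_) (by positivity)) _
    exact fun x hx => ⟨hx.1, hx.2.trans ht.2⟩
  refine ⟨part1, ?_, ?_⟩
  · intro hB1
    exact ne_top_of_le_ne_top (ENNReal.mul_ne_top hcne hB1) (iSup₂_le part1)
  · intro hB1
    obtain ⟨t₀, hat₀, ht₀b⟩ := EReal.exists_between_coe_real hab
    have ha_ne_top : a ≠ ⊤ := ne_top_of_lt hat₀
    have hInt : (∫⁻ s in EIoo a b, Hfun s) ≠ ⊤ := by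
      intro h
      apply hB1
      rw [hB1eq, h]
      exact ENNReal.top_rpow_of_pos (by positivity)
    set lam : Measure ℝ := (volume.restrict (EIoo a b)).withDensity Hfun with hlamdef
    have hlam : ∀ s : ℝ, (s : EReal) ≤ b →
        lam (EIoo a (s : EReal)) = ∫⁻ x in EIoo a (s : EReal), Hfun x := by
      intro s hs
      have hsub : EIoo a (s : EReal) ⊆ EIoo a b := fun x hx =>
        ⟨hx.1, lt_of_lt_of_le hx.2 hs⟩
      rw [hlamdef, withDensity_apply _ (measurableSet_EIoo a s),
        Measure.restrict_restrict (measurableSet_EIoo a s),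
        inter_eq_self_of_subset_left hsub]
    have hlamfin : lam univ ≠ ⊤ := by
      rw [hlamdef, withDensity_apply _ MeasurableSet.univ, setLIntegral_univ]
      exact hInt
    rw [ENNReal.tendsto_nhds_zero]
    intro δ hδ
    rcases eq_or_ne δ ⊤ with rfl | hδtop
    · exact Eventually.of_forall fun _ => le_top
    set δ' := (δ / 2 ^ (1 / q)) ^ r with hδ'
    have hδ'pos : 0 < δ' :=
      ENNReal.rpow_pos (ENNReal.div_pos hδ.ne' hcne)
        (ENNReal.div_lt_top hδtop hcpos.ne').ne
    have hseq : ∃ u : ℕ → ℝ, Antitone u ∧ (∀ n, a < ((u n : ℝ) : EReal)) ∧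
        (∀ n, u n ≤ t₀) ∧ (∀ x : ℝ, a < (x : EReal) → ∃ n, u n ≤ x) := by
      rcases eq_or_ne a ⊥ with rfl | hne
      · refine ⟨fun n => t₀ - n, ?_, ?_, ?_, ?_⟩
        · intro m n h
          simp only
          have : (m : ℝ) ≤ n := Nat.cast_le.mpr h
          linarith
        · exact fun n => EReal.bot_lt_coe _
        · intro n
          simp only
          have : (0:ℝ) ≤ n := Nat.cast_nonneg n
          linarith
        · intro x _
          obtain ⟨n, hn⟩ := exists_nat_ge (t₀ - x)
          exact ⟨n, by simp only; linarith⟩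
      · obtain ⟨a', rfl⟩ : ∃ a' : ℝ, a = (a' : EReal) :=
          ⟨a.toReal, (EReal.coe_toReal ha_ne_top hne).symm⟩
        have ha't₀ : a' < t₀ := EReal.coe_lt_coe_iff.mp hat₀
        refine ⟨fun n => a' + (t₀ - a') / (n + 1), ?_, ?_, ?_, ?_⟩
        · intro m n h
          simp only
          have h2 : (m:ℝ) + 1 ≤ (n:ℝ) + 1 := by
            have : (m : ℝ) ≤ n := Nat.cast_le.mpr h
            linarith
          have h3 : (t₀ - a') / ((n:ℝ) + 1) ≤ (t₀ - a') / ((m:ℝ) + 1) := by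
            gcongr <;> linarith
          linarith
        · intro n
          refine EReal.coe_lt_coe_iff.mpr ?_
          have : (0:ℝ) < (t₀ - a') / (n + 1) := div_pos (by linarith) (by positivity)
          simp only
          linarith
        · intro n
          simp only
          have hn0 : (0:ℝ) ≤ n := Nat.cast_nonneg n
          have h1 : (t₀ - a') / ((n:ℝ) + 1) ≤ (t₀ - a') / 1 := by
            gcongr <;> linarith
          rw [div_one] at h1
          linarith
        · intro x hx
          have hax : a' < x := EReal.coe_lt_coe_iff.mp hx
          obtain ⟨n, hn⟩ := exists_nat_one_div_lt
            (div_pos (by linarith : (0:ℝ) < x - a') (by linarith : (0:ℝ) < t₀ - a'))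
          refine ⟨n, ?_⟩
          have hc : (t₀ - a') / ((n:ℝ) + 1) < x - a' := by
            calc (t₀ - a') / ((n:ℝ) + 1) = (t₀ - a') * (1 / ((n:ℝ) + 1)) := by ring
              _ < (t₀ - a') * ((x - a') / (t₀ - a')) :=
                  mul_lt_mul_of_pos_left hn (by linarith)
              _ = x - a' := by
                  rw [mul_comm, div_mul_cancel₀ _ (by linarith : t₀ - a' ≠ 0)]
          simp only
          linarith
    obtain ⟨u, hanti, hau, hut₀, hcof⟩ := hseq
    have hiInter : (⋂ n, EIoo a ((u n : ℝ) : EReal)) = ∅ := by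
      ext x
      simp only [mem_iInter, mem_empty_iff_false, iff_false]
      intro hx
      obtain ⟨n, hn⟩ := hcof x (hx 0).1
      exact absurd (EReal.coe_lt_coe_iff.mp (hx n).2) (not_lt.mpr hn)
    have htend := tendsto_measure_iInter_atTop (μ := lam)
      (fun n => (measurableSet_EIoo a (u n)).nullMeasurableSet)
      (fun m n h => EIoo_mono (EReal.coe_le_coe_iff.mpr (hanti h)))
      ⟨0, ne_top_of_le_ne_top hlamfin (measure_mono (subset_univ _))⟩
    rw [hiInter, measure_empty] at htend
    obtain ⟨n, hn⟩ := (htend.eventually_lt_const hδ'pos).exists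
    have hmem : Set.Ioo a ((u n : ℝ) : EReal) ∈ 𝓝[Set.Ioi a] a :=
      Ioo_mem_nhdsGT_of_mem ⟨le_refl a, hau n⟩
    refine Filter.eventually_of_mem (Filter.preimage_mem_comap hmem) fun s hs => ?_
    have hsun : s < u n := EReal.coe_lt_coe_iff.mp hs.2
    have hsb : (s : EReal) ≤ b := by
      refine le_of_lt (lt_trans ?_ ht₀b)
      exact_mod_cast EReal.coe_lt_coe_iff.mpr (lt_of_lt_of_le hsun (hut₀ n))
    calc V s ^ (-ε) * (∫⁻ y in EIoo a (s : EReal), V y ^ (q * (ε + 1)) * w y) ^ (1 / q)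
        ≤ (2 : ℝ≥0∞) ^ (1 / q) * (∫⁻ x in EIoo a (s : EReal), Hfun x) ^ (1 / r) := hptw s
      _ = (2 : ℝ≥0∞) ^ (1 / q) * (lam (EIoo a (s : EReal))) ^ (1 / r) := by
          rw [hlam s hsb]
      _ ≤ (2 : ℝ≥0∞) ^ (1 / q) * (lam (EIoo a ((u n : ℝ) : EReal))) ^ (1 / r) :=
          mul_le_mul_right (ENNReal.rpow_le_rpow
            (measure_mono (EIoo_mono (EReal.coe_le_coe_iff.mpr hsun.le))) (by positivity)) _
      _ ≤ (2 : ℝ≥0∞) ^ (1 / q) * δ' ^ (1 / r) :=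
          mul_le_mul_right (ENNReal.rpow_le_rpow hn.le (by positivity)) _
      _ = (2 : ℝ≥0∞) ^ (1 / q) * (δ / 2 ^ (1 / q)) := by
          rw [hδ', ← ENNReal.rpow_mul]
          congr 1
          rw [mul_one_div, div_self hr0.ne', ENNReal.rpow_one]
      _ ≤ δ := ENNReal.mul_div_le
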